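/- If G is a chorded cycle on 4 or more vertices, then τ(G) ≥ 3. -/

import Mathlib

open scoped Classical

namespace Money

/-- A finite simple directed graph without loops, on a subset of `Fin n`. -/
structure Digraph (n : ℕ) where
  verts : Finset (Fin n)
  edges : Finset (Fin n × Fin n)
  mem_verts : ∀ e ∈ edges, e.1 ∈ verts ∧ e.2 ∈ verts
  no_loops : ∀ e ∈ edges, e.1 ≠ e.2

namespace Digraph

variable {n : ℕ}

/-- There is a directed path (possibly empty) from `i` to `j`. -/
def Reaches (G : Digraph n) : Fin n → Fin n → Prop :=
  Relation.ReflTransGen fun a b => (a, b) ∈ G.edges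

/-- `G` is connected: nonempty, and any vertex reaches any other by a directed path. -/
def Connected (G : Digraph n) : Prop :=
  G.verts.Nonempty ∧ ∀ i ∈ G.verts, ∀ j ∈ G.verts, G.Reaches i j

/-- `T` is (the edge set of) a spanning `i`-tree of `G`: every vertex `j ≠ i`
has a unique directed path in `T` to `i`. -/
def IsSpanTree (G : Digraph n) (i : Fin n) (T : Finset (Fin n × Fin n)) : Prop :=
  T ⊆ G.edges ∧
  (∀ j ∈ G.verts, j ≠ i → ∃! k, (j, k) ∈ T) ∧
  (∀ k, (i, k) ∉ T) ∧
  ∀ j ∈ G.verts, Relation.ReflTransGen (fun a b => (a, b) ∈ T) j i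

/-- The spanning-tree price of vertex `i` at edge weights `b`. -/
noncomputable def price (G : Digraph n) (i : Fin n) (b : Fin n × Fin n → ℝ) : ℝ :=
  ∑ T ∈ G.edges.powerset.filter (fun T => G.IsSpanTree i T), ∏ e ∈ T, b e

/-- The price-ratio function `b ↦ p_i(b)/p_j(b)`. -/
noncomputable def priceRatio (G : Digraph n) (i j : Fin n) (b : Fin n × Fin n → ℝ) : ℝ :=
  G.price i b / G.price j b

/-- An edge coordinate `e` is influential for `f` (as a function on positive
weight vectors on the edges of `G`). -/
def Influential (G : Digraph n) (f : (Fin n × Fin n → ℝ) → ℝ) (e : Fin n × Fin n) : Prop :=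
  ∃ b b' : Fin n × Fin n → ℝ,
    (∀ e' ∈ G.edges, 0 < b e') ∧ (∀ e' ∈ G.edges, 0 < b' e') ∧
    (∀ e', e' ≠ e → b e' = b' e') ∧ f b ≠ f b'

/-- `π_ij(G)`: the number of influential edges of the price-ratio `p_i/p_j`. -/
noncomputable def priceCplxPair (G : Digraph n) (i j : Fin n) : ℕ :=
  (G.edges.filter (fun e => G.Influential (G.priceRatio i j) e)).card

/-- The price complexity `π(G) = max_{i ≠ j} π_ij(G)`. -/
noncomputable def priceComplexity (G : Digraph n) : ℕ :=
  ((G.verts ×ˢ G.verts).filter fun p => p.1 ≠ p.2).sup fun p => G.priceCplxPair p.1 p.2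

/-- There is a directed walk of length `k` from `i` to `j`. -/
def HasWalk (G : Digraph n) (i j : Fin n) (k : ℕ) : Prop :=
  ∃ g : ℕ → Fin n, g 0 = i ∧ g k = j ∧ ∀ t < k, (g t, g (t + 1)) ∈ G.edges

/-- Length of a shortest directed path from `i` to `j`. -/
noncomputable def dist (G : Digraph n) (i j : Fin n) : ℕ := sInf {k | G.HasWalk i j k}

/-- The time complexity `τ(G)`: the diameter of `G`. -/
noncomputable def timeComplexity (G : Digraph n) : ℕ :=
  ((G.verts ×ˢ G.verts).filter fun p => p.1 ≠ p.2).sup fun p => G.dist p.1 p.2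

def outdeg (G : Digraph n) (v : Fin n) : ℕ := (G.edges.filter fun e => e.1 = v).card

def indeg (G : Digraph n) (v : Fin n) : ℕ := (G.edges.filter fun e => e.2 = v).card

/-- A directed cycle: connected, and every vertex has exactly one outgoing
and one incoming edge. -/
def IsCycleGraph (G : Digraph n) : Prop :=
  G.Connected ∧ ∀ v ∈ G.verts, G.outdeg v = 1 ∧ G.indeg v = 1

/-- `P` is a (simple) directed path from `s` to `t`, `s ≠ t`. -/
def IsPathGraph (P : Digraph n) (s t : Fin n) : Prop :=
  s ≠ t ∧ s ∈ P.verts ∧ t ∈ P.verts ∧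
  (∀ v ∈ P.verts, P.Reaches s v ∧ P.Reaches v t) ∧
  (∀ v ∈ P.verts, v ≠ t → P.outdeg v = 1) ∧ P.outdeg t = 0 ∧
  (∀ v ∈ P.verts, v ≠ s → P.indeg v = 1) ∧ P.indeg s = 0

/-- Union of two digraphs. -/
def union (G H : Digraph n) : Digraph n where
  verts := G.verts ∪ H.verts
  edges := G.edges ∪ H.edges
  mem_verts := by
    intro e he
    rcases Finset.mem_union.mp he with h | h
    · exact ⟨Finset.mem_union_left _ (G.mem_verts e h).1,
        Finset.mem_union_left _ (G.mem_verts e h).2⟩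
    · exact ⟨Finset.mem_union_right _ (H.mem_verts e h).1,
        Finset.mem_union_right _ (H.mem_verts e h).2⟩
  no_loops := by
    intro e he
    rcases Finset.mem_union.mp he with h | h
    · exact G.no_loops e h
    · exact H.no_loops e h

/-- A chorded cycle: a directed cycle `C` together with a directed path `P`
joining two distinct vertices of `C`, otherwise disjoint from `C`. -/
def IsChordedCycle (G : Digraph n) : Prop :=
  ∃ (C P : Digraph n) (s t : Fin n),
    C.IsCycleGraph ∧ P.IsPathGraph s t ∧ s ∈ C.verts ∧ t ∈ C.verts ∧
    P.verts ∩ C.verts = {s, t} ∧ Disjoint C.edges P.edges ∧ G = C.union P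

/-- A `k`-rose: `k` directed cycles sharing a single common vertex, otherwise
pairwise disjoint.  A `0`-rose is a single vertex. -/
def IsRose (G : Digraph n) (k : ℕ) : Prop :=
  ∃ (j : Fin n) (C : Fin k → Digraph n),
    (∀ i, (C i).IsCycleGraph) ∧ (∀ i, j ∈ (C i).verts) ∧
    (∀ i i', i ≠ i' → (C i).verts ∩ (C i').verts = {j}) ∧
    G.verts = insert j (Finset.univ.biUnion fun i => (C i).verts) ∧
    G.edges = Finset.univ.biUnion fun i => (C i).edges

/-- `H` is a subgraph of `G` (obtained by deleting some edges and vertices). -/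
def IsSubgraph (H G : Digraph n) : Prop := H.verts ⊆ G.verts ∧ H.edges ⊆ G.edges

/-- The circuit rank `c(G) = e(G) - v(G) + 1`. -/
def circuitRank (G : Digraph n) : ℤ := (G.edges.card : ℤ) - (G.verts.card : ℤ) + 1

/-- The edge `ij` is collapsible. -/
def Collapsible (G : Digraph n) (i j : Fin n) : Prop :=
  (i, j) ∈ G.edges ∧ G.outdeg i = 1 ∧ (j, i) ∉ G.edges ∧
  ∀ k, ¬((k, i) ∈ G.edges ∧ (k, j) ∈ G.edges)

/-- `G` is rigid: no collapsible edges. -/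
def Rigid (G : Digraph n) : Prop := ∀ i j, ¬G.Collapsible i j

/-- `k` covers the ordinary vertex `i` (whose unique outgoing edge is `ij`). -/
def Covers (G : Digraph n) (k i : Fin n) : Prop :=
  G.outdeg i = 1 ∧ ∃ j, (i, j) ∈ G.edges ∧
    (((k, i) ∈ G.edges ∧ (k, j) ∈ G.edges) ∨ (k = j ∧ (j, i) ∈ G.edges))

/-- A star on all of `Fin n`: a center joined to every other vertex by a pair
of oppositely directed edges, and no other edges. -/
def IsStar (G : Digraph n) : Prop :=
  ∃ c : Fin n, G.verts = Finset.univ ∧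
    G.edges = Finset.univ.filter fun e => (e.1 = c ∧ e.2 ≠ c) ∨ (e.2 = c ∧ e.1 ≠ c)

/-- The complete directed graph on all of `Fin n`. -/
def IsComplete (G : Digraph n) : Prop :=
  G.verts = Finset.univ ∧ G.edges = Finset.univ.filter fun e => e.1 ≠ e.2

/-- A chorded triangle: a 3-cycle `u → v → w → u` together with the
bidirected pair between `u` and `w`. -/
def IsChordedTriangle (T : Digraph n) : Prop :=
  ∃ u v w : Fin n, u ≠ v ∧ v ≠ w ∧ u ≠ w ∧
    T.verts = {u, v, w} ∧ T.edges = {(u, w), (w, u), (u, v), (v, w)}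

end Digraph

end Money

open Money Money.Digraph

namespace Stmt18Aux

open Money Money.Digraph

variable {n : ℕ}

lemma indeg_unique {G : Money.Digraph n} {v : Fin n} (h : G.indeg v = 1) :
    ∃ x, (x, v) ∈ G.edges ∧ ∀ y, (y, v) ∈ G.edges → y = x := by
  rw [Money.Digraph.indeg, Finset.card_eq_one] at h
  obtain ⟨e, he⟩ := h
  have hmem : e ∈ G.edges.filter (fun e => e.2 = v) := he ▸ Finset.mem_singleton_self e
  rw [Finset.mem_filter] at hmem
  refine ⟨e.1, ?_, ?_⟩
  · have : (e.1, v) = e := by rw [← hmem.2]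
    rw [this]; exact hmem.1
  · intro y hy
    have h2 : (y, v) ∈ G.edges.filter (fun e => e.2 = v) := Finset.mem_filter.mpr ⟨hy, rfl⟩
    rw [he, Finset.mem_singleton] at h2
    exact congrArg Prod.fst h2

lemma outdeg_unique {G : Money.Digraph n} {v : Fin n} (h : G.outdeg v = 1) :
    ∃ x, (v, x) ∈ G.edges ∧ ∀ y, (v, y) ∈ G.edges → y = x := by
  rw [Money.Digraph.outdeg, Finset.card_eq_one] at h
  obtain ⟨e, he⟩ := h
  have hmem : e ∈ G.edges.filter (fun e => e.1 = v) := he ▸ Finset.mem_singleton_self e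
  rw [Finset.mem_filter] at hmem
  refine ⟨e.2, ?_, ?_⟩
  · have : (v, e.2) = e := by rw [← hmem.2]
    rw [this]; exact hmem.1
  · intro y hy
    have h2 : (v, y) ∈ G.edges.filter (fun e => e.1 = v) := Finset.mem_filter.mpr ⟨hy, rfl⟩
    rw [he, Finset.mem_singleton] at h2
    exact congrArg Prod.snd h2

lemma indeg_zero {G : Money.Digraph n} {v : Fin n} (h : G.indeg v = 0) :
    ∀ y, (y, v) ∉ G.edges := by
  rw [Money.Digraph.indeg, Finset.card_eq_zero] at h
  intro y hy
  have : (y, v) ∈ G.edges.filter (fun e => e.2 = v) := Finset.mem_filter.mpr ⟨hy, rfl⟩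
  simp [h] at this

lemma outdeg_zero {G : Money.Digraph n} {v : Fin n} (h : G.outdeg v = 0) :
    ∀ y, (v, y) ∉ G.edges := by
  rw [Money.Digraph.outdeg, Finset.card_eq_zero] at h
  intro y hy
  have : (v, y) ∈ G.edges.filter (fun e => e.1 = v) := Finset.mem_filter.mpr ⟨hy, rfl⟩
  simp [h] at this

lemma reaches_exists_walk {G : Money.Digraph n} {i j : Fin n} (h : G.Reaches i j) :
    ∃ k, G.HasWalk i j k := by
  induction h with
  | refl => exact ⟨0, fun _ => i, rfl, rfl, fun t ht => absurd ht (Nat.not_lt_zero t)⟩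
  | @tail b c hab hbc ih =>
    obtain ⟨k, g, hg0, hgk, hstep⟩ := ih
    refine ⟨k + 1, fun m => if m ≤ k then g m else c, by simp [hg0], by simp, ?_⟩
    intro t ht
    rcases Nat.lt_or_ge t k with h' | h'
    · simpa [Nat.le_of_lt h', Nat.succ_le_of_lt h'] using hstep t h'
    · have heq : t = k := Nat.le_antisymm (Nat.lt_succ_iff.mp ht) h'
      subst heq
      simpa [hgk] using hbc

end Stmt18Aux
open Stmt18Aux in
/-- a chorded cycle on at least `4` vertices has `τ(G) ≥ 3`. -/
theorem stmt18 {n : ℕ} (G : Money.Digraph n) (hG : G.IsChordedCycle)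
    (hm : 4 ≤ G.verts.card) :
    3 ≤ G.timeComplexity := by
  obtain ⟨C, P, s, t, hC, hP, hsC, htC, hPC, hdisj, hGeq⟩ := hG
  subst hGeq
  have hverts : (C.union P).verts = C.verts ∪ P.verts := rfl
  have hedges : (C.union P).edges = C.edges ∪ P.edges := rfl
  -- unique in-neighbor of any vertex ≠ t
  have key : ∀ j, j ∈ (C.union P).verts → j ≠ t →
      ∃ x, (x, j) ∈ (C.union P).edges ∧ ∀ y, (y, j) ∈ (C.union P).edges → y = x := by
    intro j hj hjt
    by_cases hjc : j ∈ C.verts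
    · obtain ⟨x, hx, hxu⟩ := indeg_unique (hC.2 j hjc).2
      refine ⟨x, Finset.mem_union_left _ hx, ?_⟩
      intro y hy
      rcases Finset.mem_union.mp hy with h | h
      · exact hxu y h
      · exfalso
        have hjP : j ∈ P.verts := (P.mem_verts _ h).2
        have hjm : j ∈ ({s, t} : Finset (Fin n)) := by
          rw [← hPC]; exact Finset.mem_inter.mpr ⟨hjP, hjc⟩
        rcases Finset.mem_insert.mp hjm with h' | h'
        · subst h'
          exact indeg_zero hP.2.2.2.2.2.2.2 _ h
        · exact hjt (Finset.mem_singleton.mp h')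
    · have hjP : j ∈ P.verts := by
        rcases Finset.mem_union.mp hj with h | h
        · exact absurd h hjc
        · exact h
      have hjs : j ≠ s := fun h => hjc (h ▸ hsC)
      obtain ⟨x, hx, hxu⟩ := indeg_unique (hP.2.2.2.2.2.2.1 j hjP hjs)
      refine ⟨x, Finset.mem_union_right _ hx, ?_⟩
      intro y hy
      rcases Finset.mem_union.mp hy with h | h
      · exact absurd (C.mem_verts _ h).2 hjc
      · exact hxu y h
  -- the unique out-neighbor of t
  obtain ⟨t', _ht'e, ht'u⟩ := outdeg_unique (hC.2 t htC).1
  have htout : ∀ z, (t, z) ∈ (C.union P).edges → z = t' := by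
    intro z hz
    rcases Finset.mem_union.mp hz with h | h
    · exact ht'u z h
    · exact absurd h (outdeg_zero hP.2.2.2.2.2.1 z)
  -- choose j ∉ {t, t'}
  have hjex : ((C.union P).verts \ {t, t'}).Nonempty := by
    rw [← Finset.card_pos]
    have h1 : (C.union P).verts.card ≤
        ((C.union P).verts \ ({t, t'} : Finset (Fin n))).card + ({t, t'} : Finset (Fin n)).card :=
      Finset.card_le_card_sdiff_add_card
    have h2 : ({t, t'} : Finset (Fin n)).card ≤ 2 := by
      apply le_trans (Finset.card_insert_le _ _); simp
    omega
  obtain ⟨j, hj⟩ := hjex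
  obtain ⟨hjv, hjnot⟩ := Finset.mem_sdiff.mp hj
  have hjt : j ≠ t := fun h => hjnot (by simp [h])
  have hjt' : j ≠ t' := fun h => hjnot (by simp [h])
  -- in-neighbor x of j, in-neighbor y of x
  obtain ⟨x, hxe, hxu⟩ := key j hjv hjt
  have hxt : x ≠ t := fun h => hjt' (htout j (h ▸ hxe))
  have hxv : x ∈ (C.union P).verts := ((C.union P).mem_verts _ hxe).1
  obtain ⟨y, hye, hyu⟩ := key x hxv hxt
  -- choose i ∉ {j, x, y}
  have hiex : ((C.union P).verts \ {j, x, y}).Nonempty := by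
    rw [← Finset.card_pos]
    have h1 : (C.union P).verts.card ≤
        ((C.union P).verts \ ({j, x, y} : Finset (Fin n))).card + ({j, x, y} : Finset (Fin n)).card :=
      Finset.card_le_card_sdiff_add_card
    have h2 : ({j, x, y} : Finset (Fin n)).card ≤ 3 := by
      apply le_trans (Finset.card_insert_le _ _)
      have := Finset.card_insert_le x ({y} : Finset (Fin n))
      simp at this ⊢
      omega
    omega
  obtain ⟨i, hi⟩ := hiex
  obtain ⟨hiv, hinot⟩ := Finset.mem_sdiff.mp hi
  have hij : i ≠ j := fun h => hinot (by simp [h])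
  have hix : i ≠ x := fun h => hinot (by simp [h])
  have hiy : i ≠ y := fun h => hinot (by simp [h])
  -- connectivity: i reaches j
  have hmonoC : ∀ {a b : Fin n}, C.Reaches a b → (C.union P).Reaches a b := fun h =>
    Relation.ReflTransGen.mono (fun a b hab => Finset.mem_union_left _ hab) _ _ h
  have hmonoP : ∀ {a b : Fin n}, P.Reaches a b → (C.union P).Reaches a b := fun h =>
    Relation.ReflTransGen.mono (fun a b hab => Finset.mem_union_right _ hab) _ _ h
  have hreach_t : ∀ v ∈ (C.union P).verts, (C.union P).Reaches v t := by
    intro v hv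
    rcases Finset.mem_union.mp hv with h | h
    · exact hmonoC (hC.1.2 v h t htC)
    · exact hmonoP (hP.2.2.2.1 v h).2
  have ht_reach : ∀ v ∈ (C.union P).verts, (C.union P).Reaches t v := by
    intro v hv
    rcases Finset.mem_union.mp hv with h | h
    · exact hmonoC (hC.1.2 t htC v h)
    · exact (hmonoC (hC.1.2 t htC s hsC)).trans (hmonoP (hP.2.2.2.1 v h).1)
  obtain ⟨k0, hwalk⟩ := reaches_exists_walk ((hreach_t i hiv).trans (ht_reach j hjv))
  -- every walk from i to j has length ≥ 3
  have hall : ∀ k, (C.union P).HasWalk i j k → 3 ≤ k := by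
    intro k hk
    obtain ⟨g, hg0, hgk, hstep⟩ := hk
    by_contra hlt
    push_neg at hlt
    interval_cases k
    · exact hij (hg0 ▸ hgk ▸ rfl)
    · have h01 := hstep 0 (by norm_num)
      rw [hg0] at h01
      rw [show (0:ℕ) + 1 = 1 from rfl, hgk] at h01
      exact hix (hxu i h01)
    · have h01 := hstep 0 (by norm_num)
      have h12 := hstep 1 (by norm_num)
      rw [hg0] at h01
      rw [show (1:ℕ) + 1 = 2 from rfl, hgk] at h12
      have hg1 : g 1 = x := hxu _ h12
      rw [show (0:ℕ) + 1 = 1 from rfl, hg1] at h01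
      exact hiy (hyu i h01)
  have hdist : 3 ≤ (C.union P).dist i j :=
    hall _ (Nat.sInf_mem (⟨k0, hwalk⟩ : {k | (C.union P).HasWalk i j k}.Nonempty))
  have hmempair : (i, j) ∈
      (((C.union P).verts ×ˢ (C.union P).verts).filter fun p => p.1 ≠ p.2) :=
    Finset.mem_filter.mpr ⟨Finset.mem_product.mpr ⟨hiv, hjv⟩, hij⟩
  exact le_trans hdist (Finset.le_sup (f := fun p => (C.union P).dist p.1 p.2) hmempair)
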